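/- arXiv:0812.4855 — 2 statements merged into one kernel-verified Lean document; each statement's English description precedes it below -/
import Mathlib

section
/- Let (g, B, h, h') be a Manin triple with dual bases {e_i} of h and {e^i} of h', and set v' := Σ_i [e^i, e_i]. Write v' = w + w* with w = P_h(v') ∈ h and w* = P_{h'}(v') ∈ h', where P_h, P_{h'} are the projections associated to the decomposition g = h ⊕ h'. Then: (1) for every x ∈ h, B(w*, x) equals the trace of the endomorphism of h sending y ↦ [y, x] (note [y,x] ∈ h since h is a subalgebra); and (2) for every ξ ∈ h', B(w, ξ) equals the trace of the endomorphism of h sending y ↦ P_h([y, ξ]). -/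
open Module

/-- Let `(g, B, h, h')` be a Manin triple with dual bases `{e_i}` of `h`
and `{e^i}` of `h'`, set `v' = Σ_i [e^i, e_i]`, and write `v' = w + w*` with
`w = P_h v' ∈ h`, `w* = P_{h'} v' ∈ h'`.  Then:
(1) for every `x ∈ h`, `B(w*, x)` is the trace of the endomorphism of `h` sending
`y ↦ [y, x]` (expressed here as `P_h ∘ (-ad x) ∘ incl_h`, which sends `y ↦ P_h [y,x] = [y,x]`);
(2) for every `ξ ∈ h'`, `B(w, ξ)` is the trace of the endomorphism of `h` sending
`y ↦ P_h [y, ξ]`. -/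
theorem manin_triple_modular_element_traces
    {g : Type*} [LieRing g] [LieAlgebra ℂ g] [FiniteDimensional ℂ g]
    (B : g →ₗ[ℂ] g →ₗ[ℂ] ℂ)
    (hsymm : ∀ x y : g, B x y = B y x)
    (hnondeg : ∀ x : g, (∀ y : g, B x y = 0) → x = 0)
    (hinv : ∀ a b c : g, B ⁅a, b⁆ c = B a ⁅b, c⁆)
    (h h' : Submodule ℂ g)
    (hsub : ∀ x ∈ h, ∀ y ∈ h, ⁅x, y⁆ ∈ h)
    (hsub' : ∀ x ∈ h', ∀ y ∈ h', ⁅x, y⁆ ∈ h')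
    (hiso : ∀ x ∈ h, ∀ y ∈ h, B x y = 0)
    (hiso' : ∀ x ∈ h', ∀ y ∈ h', B x y = 0)
    (hcompl : IsCompl h h')
    (n : ℕ)
    (e : Basis (Fin n) ℂ h) (e' : Basis (Fin n) ℂ h')
    (he : ∀ i j, B (e' i : g) (e j : g) = if i = j then 1 else 0)
    (v' : g) (hv' : v' = ∑ i, ⁅(e' i : g), (e i : g)⁆)
    (w : h) (hw : w = h.linearProjOfIsCompl h' hcompl v')
    (wstar : h') (hwstar : wstar = h'.linearProjOfIsCompl h hcompl.symm v') :
    (∀ x : h, B (wstar : g) (x : g) =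
      LinearMap.trace ℂ h
        ((h.linearProjOfIsCompl h' hcompl) ∘ₗ
          (-(LieAlgebra.ad ℂ g (x : g))) ∘ₗ h.subtype)) ∧
    (∀ ξ : h', B (w : g) (ξ : g) =
      LinearMap.trace ℂ h
        ((h.linearProjOfIsCompl h' hcompl) ∘ₗ
          (-(LieAlgebra.ad ℂ g (ξ : g))) ∘ₗ h.subtype)) := by
  -- the coordinate functional of `e` is given by pairing with `e' i`
  have coord : ∀ (y : h) (i : Fin n), B (e' i : g) (y : g) = e.repr y i := by
    intro y i
    have : ((B (e' i : g)).comp h.subtype : h →ₗ[ℂ] ℂ) = e.coord i := by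
      apply e.ext
      intro j
      simp [he i j, Basis.coord_apply, Finsupp.single_apply, eq_comm]
    simpa [Basis.coord_apply] using congrArg (fun f => f y) this
  -- the coordinate of the projection of an arbitrary `z : g`
  have key : ∀ (z : g) (i : Fin n),
      (e.repr (h.linearProjOfIsCompl h' hcompl z) i : ℂ) = B (e' i : g) z := by
    intro z i
    have hz : (h.linearProjOfIsCompl h' hcompl z : g) + (h'.linearProjOfIsCompl h hcompl.symm z : g) = z :=
      Submodule.projection_add_projection_eq_self hcompl z
    have h0 : B (e' i : g) ((h'.linearProjOfIsCompl h hcompl.symm z : g)) = 0 :=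
      hiso' _ (e' i).2 _ (h'.linearProjOfIsCompl h hcompl.symm z).2
    calc (e.repr (h.linearProjOfIsCompl h' hcompl z) i : ℂ)
        = B (e' i : g) ((h.linearProjOfIsCompl h' hcompl z : g)) := (coord _ i).symm
      _ = B (e' i : g) ((h.linearProjOfIsCompl h' hcompl z : g))
          + B (e' i : g) ((h'.linearProjOfIsCompl h hcompl.symm z : g)) := by rw [h0, add_zero]
      _ = B (e' i : g) z := by rw [← map_add, hz]
  -- main computation: trace equals `B v' z`
  have main : ∀ z : g,
      LinearMap.trace ℂ h
        ((h.linearProjOfIsCompl h' hcompl) ∘ₗ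
          (-(LieAlgebra.ad ℂ g z)) ∘ₗ h.subtype) = B v' z := by
    intro z
    rw [LinearMap.trace_eq_matrix_trace ℂ e, Matrix.trace]
    have : ∀ i : Fin n,
        (LinearMap.toMatrix e e ((h.linearProjOfIsCompl h' hcompl) ∘ₗ
          (-(LieAlgebra.ad ℂ g z)) ∘ₗ h.subtype)).diag i = B ⁅(e' i : g), (e i : g)⁆ z := by
      intro i
      rw [Matrix.diag_apply, LinearMap.toMatrix_apply]
      have harg : ((-(LieAlgebra.ad ℂ g z)) ∘ₗ h.subtype) (e i) = ⁅(e i : g), z⁆ := by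
        simp only [LinearMap.comp_apply, LinearMap.neg_apply, LieAlgebra.ad_apply,
          Submodule.coe_subtype]
        exact lie_skew _ z
      rw [LinearMap.comp_apply, harg, key, ← hinv]
    rw [Finset.sum_congr rfl (fun i _ => this i), hv', map_sum, LinearMap.sum_apply]
  have hsum : (w : g) + (wstar : g) = v' := by
    rw [hw, hwstar]
    exact Submodule.projection_add_projection_eq_self hcompl v'
  constructor
  · intro x
    rw [main (x : g), ← hsum, map_add, LinearMap.add_apply,
      hiso _ w.2 _ x.2, zero_add]
  · intro ξ
    rw [main (ξ : g), ← hsum, map_add, LinearMap.add_apply,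
      hiso' _ wstar.2 _ ξ.2, add_zero]
end

section
/- Let (g, B, h, h') be a Manin triple with dual bases {e_i} of h and {e^i} of h'. Assume moreover that the Casimir operator of (g, B) acts on g by the scalar 2h^∨ for some complex number h^∨; that is, for dual bases {a_i}, {a^i} of g with respect to B (B(a^i, a_j) = δ^i_j), the operator Σ_i (ad a^i) ∘ (ad a_i) : g → g equals 2h^∨ · id_g. Set v' := Σ_i [e^i, e_i], write v' = w + w* with w ∈ h, w* ∈ h', and define v := w − w*. Then B(v, v) = −(2/3) h^∨ dim h. -/
open Module

private lemma sum_swap12 {n : ℕ} (f : Fin n → Fin n → Fin n → ℂ) :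
    ∑ i, ∑ j, ∑ k, f i j k = ∑ j, ∑ i, ∑ k, f i j k :=
  Finset.sum_comm

private lemma sum_swap23 {n : ℕ} (f : Fin n → Fin n → Fin n → ℂ) :
    ∑ i, ∑ j, ∑ k, f i j k = ∑ i, ∑ k, ∑ j, f i j k :=
  Finset.sum_congr rfl fun _ _ => Finset.sum_comm

private lemma sum_cyc {n : ℕ} (f : Fin n → Fin n → Fin n → ℂ) :
    ∑ i, ∑ j, ∑ k, f i j k = ∑ j, ∑ k, ∑ i, f i j k := by
  rw [sum_swap12 f]
  exact Finset.sum_congr rfl fun _ _ => Finset.sum_comm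

private lemma sum_cyc' {n : ℕ} (f : Fin n → Fin n → Fin n → ℂ) :
    ∑ i, ∑ j, ∑ k, f i j k = ∑ k, ∑ i, ∑ j, f i j k := by
  rw [sum_swap23 f]
  exact Finset.sum_comm

private lemma sum_neg3 {n : ℕ} (f : Fin n → Fin n → Fin n → ℂ) :
    ∑ i, ∑ j, ∑ k, -(f i j k) = -(∑ i, ∑ j, ∑ k, f i j k) := by
  simp [Finset.sum_neg_distrib]

private lemma sum_add2 {n : ℕ} (f g : Fin n → Fin n → ℂ) :
    ∑ i, ∑ j, (f i j + g i j) = (∑ i, ∑ j, f i j) + ∑ i, ∑ j, g i j := by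
  simp [Finset.sum_add_distrib]

private lemma sum_sub2 {n : ℕ} (f g : Fin n → Fin n → ℂ) :
    ∑ i, ∑ j, (f i j - g i j) = (∑ i, ∑ j, f i j) - ∑ i, ∑ j, g i j := by
  simp [Finset.sum_sub_distrib]

/-- Let `(g, B, h, h')` be a Manin triple, and suppose the Casimir
operator of `(g, B)` acts on `g` by the scalar `2h^∨`: for any pair of dual bases
`{a_i}`, `{a^i}` of `g` with respect to `B`, `Σ_i (ad a^i) ∘ (ad a_i) = 2h^∨ · id`.
Set `v' = Σ_i [e^i, e_i]`, write `v' = w + w*` with `w ∈ h`, `w* ∈ h'`, and put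
`v = w − w*`.  Then `B(v, v) = −(2/3)·h^∨·dim h`. -/
theorem manin_triple_norm_of_modular_element
    {g : Type*} [LieRing g] [LieAlgebra ℂ g] [FiniteDimensional ℂ g]
    (B : g →ₗ[ℂ] g →ₗ[ℂ] ℂ)
    (hsymm : ∀ x y : g, B x y = B y x)
    (hnondeg : ∀ x : g, (∀ y : g, B x y = 0) → x = 0)
    (hinv : ∀ a b c : g, B ⁅a, b⁆ c = B a ⁅b, c⁆)
    (h h' : Submodule ℂ g)
    (hsub : ∀ x ∈ h, ∀ y ∈ h, ⁅x, y⁆ ∈ h)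
    (hsub' : ∀ x ∈ h', ∀ y ∈ h', ⁅x, y⁆ ∈ h')
    (hiso : ∀ x ∈ h, ∀ y ∈ h, B x y = 0)
    (hiso' : ∀ x ∈ h', ∀ y ∈ h', B x y = 0)
    (hcompl : IsCompl h h')
    (hv : ℂ)
    (hcasimir : ∀ (m : ℕ) (a a' : Basis (Fin m) ℂ g),
      (∀ i j, B (a' i) (a j) = if i = j then 1 else 0) →
      (∑ i, (LieAlgebra.ad ℂ g (a' i)) ∘ₗ (LieAlgebra.ad ℂ g (a i)))
        = (2 * hv) • (LinearMap.id : g →ₗ[ℂ] g))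
    (n : ℕ)
    (e : Basis (Fin n) ℂ h) (e' : Basis (Fin n) ℂ h')
    (he : ∀ i j, B (e' i : g) (e j : g) = if i = j then 1 else 0)
    (v' : g) (hv' : v' = ∑ i, ⁅(e' i : g), (e i : g)⁆)
    (w : h) (hw : w = h.linearProjOfIsCompl h' hcompl v')
    (wstar : h') (hwstar : wstar = h'.linearProjOfIsCompl h hcompl.symm v')
    (v : g) (hvdef : v = (w : g) - (wstar : g)) :
    B v v = -(2 / 3) * hv * (finrank ℂ h : ℂ) := by
  -- dimension
  have hcard : (finrank ℂ h : ℂ) = (n : ℂ) := by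
    rw [finrank_eq_card_basis e, Fintype.card_fin]
  -- coordinate lemmas
  have coordh : ∀ (y : h) (k : Fin n), B (e' k : g) (y : g) = e.repr y k := by
    intro y k
    have hy : (y : g) = ∑ l, e.repr y l • (e l : g) := by
      conv_lhs => rw [← e.sum_repr y]
      simp only [Submodule.coe_sum, Submodule.coe_smul]
    rw [hy, map_sum]
    simp [he, Finset.sum_ite_eq]
  have coordh' : ∀ (z : h') (k : Fin n), B (e k : g) (z : g) = e'.repr z k := by
    intro z k
    have hz : (z : g) = ∑ l, e'.repr z l • (e' l : g) := by
      conv_lhs => rw [← e'.sum_repr z]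
      simp only [Submodule.coe_sum, Submodule.coe_smul]
    rw [hz, map_sum]
    simp only [map_smul, smul_eq_mul]
    have hlk : ∀ l, B (e k : g) (e' l : g) = if l = k then 1 else 0 := by
      intro l; rw [hsymm]; exact he l k
    simp [hlk, Finset.sum_ite_eq']
  -- resolution of identity
  have expand : ∀ x : g,
      x = (∑ k, B (e' k : g) x • (e k : g)) + ∑ k, B (e k : g) x • (e' k : g) := by
    intro x
    have hx : ((h.linearProjOfIsCompl h' hcompl x : g))
        + ((h'.linearProjOfIsCompl h hcompl.symm x : g)) = x :=
      Submodule.projection_add_projection_eq_self hcompl x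
    set y := h.linearProjOfIsCompl h' hcompl x with hy
    set z := h'.linearProjOfIsCompl h hcompl.symm x with hz
    have h1 : ∀ k, B (e' k : g) x = e.repr y k := by
      intro k
      rw [← hx, map_add, coordh, hiso' _ (e' k).2 _ z.2, add_zero]
    have h2 : ∀ k, B (e k : g) x = e'.repr z k := by
      intro k
      rw [← hx, map_add, coordh', hiso _ (e k).2 _ y.2, zero_add]
    simp only [h1, h2]
    rw [← hx]
    congr 1
    · conv_lhs => rw [← e.sum_repr y]
      simp only [Submodule.coe_sum, Submodule.coe_smul]
    · conv_lhs => rw [← e'.sum_repr z]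
      simp only [Submodule.coe_sum, Submodule.coe_smul]
  -- bracket-sum helpers
  have lsum : ∀ (x : g) (f : Fin n → g), ⁅x, ∑ k, f k⁆ = ∑ k, ⁅x, f k⁆ := by
    intro x f
    have h0 := map_sum (LieAlgebra.ad ℂ g x) f Finset.univ
    simp only [LieAlgebra.ad_apply] at h0
    exact h0
  have sumlie : ∀ (x : g) (f : Fin n → g), ⁅∑ k, f k, x⁆ = ∑ k, ⁅f k, x⁆ := by
    intro x f
    rw [← lie_skew, lsum, ← Finset.sum_neg_distrib]
    exact Finset.sum_congr rfl fun k _ => lie_skew _ _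
  -- insertion of the resolution of identity
  have ins : ∀ a b z : g, B a ⁅b, z⁆ =
      (∑ k, B (e' k : g) z * B a ⁅b, (e k : g)⁆)
        + ∑ k, B (e k : g) z * B a ⁅b, (e' k : g)⁆ := by
    intro a b z
    conv_lhs => rw [expand z]
    rw [lie_add, map_add, lsum, lsum, map_sum, map_sum]
    simp only [lie_smul, map_smul, smul_eq_mul]
  have ins' : ∀ a b z : g, B a ⁅z, b⁆ =
      (∑ k, B (e' k : g) z * B a ⁅(e k : g), b⁆)
        + ∑ k, B (e k : g) z * B a ⁅(e' k : g), b⁆ := by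
    intro a b z
    conv_lhs => rw [expand z]
    rw [add_lie, map_add, sumlie, sumlie, map_sum, map_sum]
    simp only [smul_lie, map_smul, smul_eq_mul]
  -- structure constant identities
  have hV1 : ∀ i j k, B (e' j : g) ⁅(e' i : g), (e k : g)⁆
      = B (e k : g) ⁅(e' j : g), (e' i : g)⁆ := by
    intro i j k; rw [← hinv, hsymm]
  have hV2 : ∀ i j k, B (e' j : g) ⁅(e' i : g), (e' k : g)⁆ = 0 :=
    fun i j k => hiso' _ (e' j).2 _ (hsub' _ (e' i).2 _ (e' k).2)
  have hV6 : ∀ i j k, B (e j : g) ⁅(e i : g), (e' k : g)⁆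
      = B (e' k : g) ⁅(e j : g), (e i : g)⁆ := by
    intro i j k; rw [← hinv, hsymm]
  have hV7 : ∀ i j k, B (e j : g) ⁅(e i : g), (e k : g)⁆ = 0 :=
    fun i j k => hiso _ (e j).2 _ (hsub _ (e i).2 _ (e k).2)
  have hV4 : ∀ i j k, B (e' j : g) ⁅(e i : g), (e' k : g)⁆
      = -B (e i : g) ⁅(e' j : g), (e' k : g)⁆ := by
    intro i j k
    rw [← lie_skew, map_neg, hV1]
  have hV5 : ∀ i j k, B (e j : g) ⁅(e' i : g), (e k : g)⁆
      = -B (e' i : g) ⁅(e j : g), (e k : g)⁆ := by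
    intro i j k
    rw [← lie_skew, map_neg, hV6]
  have hPskew : ∀ i j k, B (e' k : g) ⁅(e j : g), (e i : g)⁆
      = -B (e' k : g) ⁅(e i : g), (e j : g)⁆ := by
    intro i j k; rw [← lie_skew, map_neg]
  have hQskew : ∀ i j k, B (e k : g) ⁅(e' j : g), (e' i : g)⁆
      = -B (e k : g) ⁅(e' i : g), (e' j : g)⁆ := by
    intro i j k; rw [← lie_skew, map_neg]
  -- combined dual bases of g
  set a : Basis (Fin (n + n)) ℂ g :=
    ((e.prod e').map (Submodule.prodEquivOfIsCompl h h' hcompl)).reindex finSumFinEquiv with ha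
  set a' : Basis (Fin (n + n)) ℂ g :=
    ((e'.prod e).map (Submodule.prodEquivOfIsCompl h' h hcompl.symm)).reindex finSumFinEquiv
    with ha'
  have ha1 : ∀ i : Fin n, a (finSumFinEquiv (Sum.inl i)) = (e i : g) := by
    intro i
    rw [ha, Basis.reindex_apply, Equiv.symm_apply_apply, Basis.map_apply]
    simp [Submodule.coe_prodEquivOfIsCompl']
  have ha2 : ∀ i : Fin n, a (finSumFinEquiv (Sum.inr i)) = (e' i : g) := by
    intro i
    rw [ha, Basis.reindex_apply, Equiv.symm_apply_apply, Basis.map_apply]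
    simp [Submodule.coe_prodEquivOfIsCompl']
  have ha'1 : ∀ i : Fin n, a' (finSumFinEquiv (Sum.inl i)) = (e' i : g) := by
    intro i
    rw [ha', Basis.reindex_apply, Equiv.symm_apply_apply, Basis.map_apply]
    simp [Submodule.coe_prodEquivOfIsCompl']
  have ha'2 : ∀ i : Fin n, a' (finSumFinEquiv (Sum.inr i)) = (e i : g) := by
    intro i
    rw [ha', Basis.reindex_apply, Equiv.symm_apply_apply, Basis.map_apply]
    simp [Submodule.coe_prodEquivOfIsCompl']
  have hdual : ∀ i j, B (a' i) (a j) = if i = j then 1 else 0 := by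
    intro i j
    obtain ⟨s, rfl⟩ := finSumFinEquiv.surjective i
    obtain ⟨t, rfl⟩ := finSumFinEquiv.surjective j
    simp only [Equiv.apply_eq_iff_eq]
    cases s with
    | inl i =>
      cases t with
      | inl j =>
        rw [ha'1, ha1, he]
        simp
      | inr j =>
        rw [ha'1, ha2, hiso' _ (e' i).2 _ (e' j).2]
        simp
    | inr i =>
      cases t with
      | inl j =>
        rw [ha'2, ha1, hiso _ (e i).2 _ (e j).2]
        simp
      | inr j =>
        rw [ha'2, ha2, hsymm, he]
        simp [eq_comm]
  have hcas := hcasimir (n + n) a a' hdual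
  have split : ∀ x : g,
      (∑ i : Fin n, ⁅(e' i : g), ⁅(e i : g), x⁆⁆)
        + (∑ i : Fin n, ⁅(e i : g), ⁅(e' i : g), x⁆⁆) = (2 * hv) • x := by
    intro x
    have h0 : (∑ i, ⁅a' i, ⁅a i, x⁆⁆) = (2 * hv) • x := by
      have h1 := LinearMap.ext_iff.mp hcas x
      simpa [LinearMap.sum_apply, LieAlgebra.ad_apply] using h1
    rw [← h0, ← Equiv.sum_comp finSumFinEquiv (fun i => ⁅a' i, ⁅a i, x⁆⁆),
      Fintype.sum_sum_type]
    simp only [ha1, ha2, ha'1, ha'2]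
  -- the master Casimir identity in coordinates
  have key : ∀ j : Fin n,
      (∑ i, B (e' j : g) ⁅(e' i : g), ⁅(e i : g), (e j : g)⁆⁆)
        + (∑ i, B (e' j : g) ⁅(e i : g), ⁅(e' i : g), (e j : g)⁆⁆) = 2 * hv := by
    intro j
    have h0 := congrArg (fun t => B (e' j : g) t) (split (e j : g))
    simp only [map_add, map_sum, map_smul, smul_eq_mul, he] at h0
    simpa using h0
  have master : (∑ j, ∑ i, B (e' j : g) ⁅(e' i : g), ⁅(e i : g), (e j : g)⁆⁆)
      + (∑ j, ∑ i, B (e' j : g) ⁅(e i : g), ⁅(e' i : g), (e j : g)⁆⁆)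
      = 2 * hv * (n : ℂ) := by
    rw [← Finset.sum_add_distrib, Finset.sum_congr rfl fun j _ => key j,
      Finset.sum_const, Finset.card_univ, Fintype.card_fin, nsmul_eq_mul]
    ring
  -- first Casimir sum
  have hS1 : (∑ j, ∑ i, B (e' j : g) ⁅(e' i : g), ⁅(e i : g), (e j : g)⁆⁆)
      = -(∑ i, ∑ j, ∑ k, B (e' k : g) ⁅(e i : g), (e j : g)⁆
          * B (e k : g) ⁅(e' i : g), (e' j : g)⁆) := by
    have step : ∀ j i, B (e' j : g) ⁅(e' i : g), ⁅(e i : g), (e j : g)⁆⁆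
        = ∑ k, -(B (e' k : g) ⁅(e i : g), (e j : g)⁆
            * B (e k : g) ⁅(e' i : g), (e' j : g)⁆) := by
      intro j i
      rw [ins]
      simp only [hV7, zero_mul, Finset.sum_const_zero, add_zero]
      refine Finset.sum_congr rfl fun k _ => ?_
      rw [hV1 i j k, hQskew i j k]
      ring
    calc (∑ j, ∑ i, B (e' j : g) ⁅(e' i : g), ⁅(e i : g), (e j : g)⁆⁆)
        = ∑ j, ∑ i, ∑ k, -(B (e' k : g) ⁅(e i : g), (e j : g)⁆
            * B (e k : g) ⁅(e' i : g), (e' j : g)⁆) :=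
          Finset.sum_congr rfl fun j _ => Finset.sum_congr rfl fun i _ => step j i
      _ = -(∑ j, ∑ i, ∑ k, B (e' k : g) ⁅(e i : g), (e j : g)⁆
            * B (e k : g) ⁅(e' i : g), (e' j : g)⁆) := by
          rw [sum_neg3]
      _ = -(∑ i, ∑ j, ∑ k, B (e' k : g) ⁅(e i : g), (e j : g)⁆
            * B (e k : g) ⁅(e' i : g), (e' j : g)⁆) := by
          rw [← sum_swap12 (fun i j k => B (e' k : g) ⁅(e i : g), (e j : g)⁆
            * B (e k : g) ⁅(e' i : g), (e' j : g)⁆)]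
  -- second Casimir sum
  have hS2 : (∑ j, ∑ i, B (e' j : g) ⁅(e i : g), ⁅(e' i : g), (e j : g)⁆⁆)
      = -(2 * ∑ i, ∑ j, ∑ k, B (e' k : g) ⁅(e i : g), (e j : g)⁆
          * B (e k : g) ⁅(e' i : g), (e' j : g)⁆) := by
    have step : ∀ j i, B (e' j : g) ⁅(e i : g), ⁅(e' i : g), (e j : g)⁆⁆
        = (∑ k, -(B (e' j : g) ⁅(e i : g), (e k : g)⁆
            * B (e j : g) ⁅(e' i : g), (e' k : g)⁆))
          + ∑ k, -(B (e' i : g) ⁅(e j : g), (e k : g)⁆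
            * B (e i : g) ⁅(e' j : g), (e' k : g)⁆) := by
      intro j i
      rw [ins]
      congr 1
      · refine Finset.sum_congr rfl fun k _ => ?_
        rw [hV1 i k j, hQskew i k j]
        ring
      · refine Finset.sum_congr rfl fun k _ => ?_
        rw [hV5 i k j, hPskew j k i, hV4 i j k]
        ring
    calc (∑ j, ∑ i, B (e' j : g) ⁅(e i : g), ⁅(e' i : g), (e j : g)⁆⁆)
        = ∑ j, ∑ i, ((∑ k, -(B (e' j : g) ⁅(e i : g), (e k : g)⁆
              * B (e j : g) ⁅(e' i : g), (e' k : g)⁆))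
            + ∑ k, -(B (e' i : g) ⁅(e j : g), (e k : g)⁆
              * B (e i : g) ⁅(e' j : g), (e' k : g)⁆)) :=
          Finset.sum_congr rfl fun j _ => Finset.sum_congr rfl fun i _ => step j i
      _ = (∑ j, ∑ i, ∑ k, -(B (e' j : g) ⁅(e i : g), (e k : g)⁆
              * B (e j : g) ⁅(e' i : g), (e' k : g)⁆))
          + ∑ j, ∑ i, ∑ k, -(B (e' i : g) ⁅(e j : g), (e k : g)⁆
              * B (e i : g) ⁅(e' j : g), (e' k : g)⁆) := by
          rw [sum_add2]
      _ = (-(∑ j, ∑ i, ∑ k, B (e' j : g) ⁅(e i : g), (e k : g)⁆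
              * B (e j : g) ⁅(e' i : g), (e' k : g)⁆))
          + -(∑ j, ∑ i, ∑ k, B (e' i : g) ⁅(e j : g), (e k : g)⁆
              * B (e i : g) ⁅(e' j : g), (e' k : g)⁆) := by
          rw [sum_neg3, sum_neg3]
      _ = -(2 * ∑ i, ∑ j, ∑ k, B (e' k : g) ⁅(e i : g), (e j : g)⁆
            * B (e k : g) ⁅(e' i : g), (e' j : g)⁆) := by
          rw [← sum_cyc' (fun i j k => B (e' k : g) ⁅(e i : g), (e j : g)⁆
              * B (e k : g) ⁅(e' i : g), (e' j : g)⁆),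
            ← sum_swap23 (fun i j k => B (e' k : g) ⁅(e i : g), (e j : g)⁆
              * B (e k : g) ⁅(e' i : g), (e' j : g)⁆)]
          ring
  -- the norm of v'
  have hBv : B v' v' = -(∑ i, ∑ j, ∑ k, B (e' k : g) ⁅(e i : g), (e j : g)⁆
      * B (e k : g) ⁅(e' i : g), (e' j : g)⁆) := by
    have expand2 : B v' v' = ∑ j, ∑ i, B ⁅(e' j : g), (e j : g)⁆ ⁅(e' i : g), (e i : g)⁆ := by
      rw [hv']
      simp only [map_sum, LinearMap.sum_apply]
      rw [Finset.sum_comm]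
    have step : ∀ j i, B ⁅(e' j : g), (e j : g)⁆ ⁅(e' i : g), (e i : g)⁆
        = ((∑ k, -(B (e' j : g) ⁅(e i : g), (e k : g)⁆
              * B (e j : g) ⁅(e' i : g), (e' k : g)⁆))
            + ∑ k, -(B (e' i : g) ⁅(e j : g), (e k : g)⁆
              * B (e i : g) ⁅(e' j : g), (e' k : g)⁆))
          - ∑ k, -(B (e' k : g) ⁅(e j : g), (e i : g)⁆
              * B (e k : g) ⁅(e' j : g), (e' i : g)⁆) := by
      intro j i
      rw [← hinv, lie_lie, map_sub, LinearMap.sub_apply, hinv, hinv, ins', ins']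
      simp only [hV2, zero_mul, Finset.sum_const_zero, zero_add]
      congr 1
      · congr 1
        · refine Finset.sum_congr rfl fun k _ => ?_
          rw [hV4 j k i, hQskew i k j, hPskew i k j]
          ring
        · refine Finset.sum_congr rfl fun k _ => ?_
          rw [hV6 j k i, hPskew j k i, hV1 k j i]
          ring
      · refine Finset.sum_congr rfl fun k _ => ?_
        rw [hV5 k j i]
        ring
    calc B v' v'
        = ∑ j, ∑ i, B ⁅(e' j : g), (e j : g)⁆ ⁅(e' i : g), (e i : g)⁆ := expand2
      _ = ∑ j, ∑ i, (((∑ k, -(B (e' j : g) ⁅(e i : g), (e k : g)⁆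
              * B (e j : g) ⁅(e' i : g), (e' k : g)⁆))
            + ∑ k, -(B (e' i : g) ⁅(e j : g), (e k : g)⁆
              * B (e i : g) ⁅(e' j : g), (e' k : g)⁆))
          - ∑ k, -(B (e' k : g) ⁅(e j : g), (e i : g)⁆
              * B (e k : g) ⁅(e' j : g), (e' i : g)⁆)) :=
          Finset.sum_congr rfl fun j _ => Finset.sum_congr rfl fun i _ => step j i
      _ = ((∑ j, ∑ i, ∑ k, -(B (e' j : g) ⁅(e i : g), (e k : g)⁆
              * B (e j : g) ⁅(e' i : g), (e' k : g)⁆))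
            + ∑ j, ∑ i, ∑ k, -(B (e' i : g) ⁅(e j : g), (e k : g)⁆
              * B (e i : g) ⁅(e' j : g), (e' k : g)⁆))
          - ∑ j, ∑ i, ∑ k, -(B (e' k : g) ⁅(e j : g), (e i : g)⁆
              * B (e k : g) ⁅(e' j : g), (e' i : g)⁆) := by
          rw [sum_sub2, sum_add2]
      _ = ((-(∑ j, ∑ i, ∑ k, B (e' j : g) ⁅(e i : g), (e k : g)⁆
              * B (e j : g) ⁅(e' i : g), (e' k : g)⁆))
            + -(∑ j, ∑ i, ∑ k, B (e' i : g) ⁅(e j : g), (e k : g)⁆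
              * B (e i : g) ⁅(e' j : g), (e' k : g)⁆))
          - -(∑ j, ∑ i, ∑ k, B (e' k : g) ⁅(e j : g), (e i : g)⁆
              * B (e k : g) ⁅(e' j : g), (e' i : g)⁆) := by
          rw [sum_neg3, sum_neg3, sum_neg3]
      _ = -(∑ i, ∑ j, ∑ k, B (e' k : g) ⁅(e i : g), (e j : g)⁆
            * B (e k : g) ⁅(e' i : g), (e' j : g)⁆) := by
          rw [← sum_cyc' (fun i j k => B (e' k : g) ⁅(e i : g), (e j : g)⁆
              * B (e k : g) ⁅(e' i : g), (e' j : g)⁆),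
            ← sum_swap23 (fun i j k => B (e' k : g) ⁅(e i : g), (e j : g)⁆
              * B (e k : g) ⁅(e' i : g), (e' j : g)⁆)]
          ring
  -- relating v and v'
  have hsum : (w : g) + (wstar : g) = v' := by
    rw [hw, hwstar]
    exact Submodule.projection_add_projection_eq_self hcompl v'
  have hww : B (w : g) (w : g) = 0 := hiso _ w.2 _ w.2
  have hss : B (wstar : g) (wstar : g) = 0 := hiso' _ wstar.2 _ wstar.2
  have hvv : B v v = -(B v' v') := by
    rw [hvdef, ← hsum]
    simp only [map_add, map_sub, LinearMap.add_apply, LinearMap.sub_apply]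
    rw [hww, hss, hsymm (wstar : g) (w : g)]
    ring
  rw [hvv, hBv, hcard]
  linear_combination ((-1 : ℂ)/3) * master + ((1 : ℂ)/3) * hS1 + ((1 : ℂ)/3) * hS2
end
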